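/- For 0 < m < 2σ₀ the filtration U_m satisfies the recurrence relations U_{m+1} = U_m + φ(U_m) (for m > 0) and φ(U_{m-1}) = U_m ∩ φ(U_m) (for m < 2σ₀). -/

import Mathlib

set_option linter.unusedSectionVars false
set_option linter.unusedVariables false


open Module Submodule Function

/-- On a perfect field the Frobenius is surjective, so images of submodules under
Frobenius-semilinear maps are again submodules. -/
instance frobSurj (k : Type*) [Field k] (p : ℕ) [Fact p.Prime] [CharP k p] [PerfectRing k p] :
    RingHomSurjective (frobenius k p) := ⟨surjective_frobenius k p⟩


variable {k : Type*} [Field k] {p : ℕ} [Fact p.Prime] [CharP k p] [PerfectRing k p]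
  {V : Type*} [AddCommGroup V] [Module k V]

/-- `φ^i(K)`, the `i`-th iterated image of `K` under the `p`-semilinear map `φ`. -/
def iterMap (φ : V →ₛₗ[frobenius k p] V) (K : Submodule k V) (i : ℕ) : Submodule k V :=
  (Submodule.map φ)^[i] K

/-- `φ^{-i}(K)`, the `i`-th iterated preimage of `K` under `φ`. -/
def iterComap (φ : V →ₛₗ[frobenius k p] V) (K : Submodule k V) (i : ℕ) : Submodule k V :=
  (Submodule.comap φ)^[i] K

/-- The smallest `φ`-stable subspace containing `K`: `U = Σ_{i ≥ 0} φ^i(K)`. -/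
def bigU (φ : V →ₛₗ[frobenius k p] V) (K : Submodule k V) : Submodule k V :=
  ⨆ i : ℕ, iterMap φ K i

/-- The flag `U_m`: `U_m = φ^{-(σ₀-m)}(K) ∩ ⋯ ∩ φ^{-1}(K) ∩ K` for `m ≤ σ₀`, and
`U_m = K + φ(K) + ⋯ + φ^{m-σ₀}(K)` for `m ≥ σ₀` (so `U_{σ₀} = K`,
`U_{σ₀+1} = K + φ(K)`). -/
def flagU (σ₀ : ℕ) (φ : V →ₛₗ[frobenius k p] V) (K : Submodule k V) (m : ℕ) : Submodule k V :=
  if m ≤ σ₀ then ⨅ i ∈ Finset.range (σ₀ - m + 1), iterComap φ K i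
  else ⨆ i ∈ Finset.range (m - σ₀ + 1), iterMap φ K i


section helpers

lemma rank_map_eq_rank (φ : V →ₛₗ[frobenius k p] V) (hinj : Function.Injective φ)
    (W : Submodule k V) : Module.rank k ↥(Submodule.map φ W) = Module.rank k ↥W := by
  let f : W →+ Submodule.map φ W :=
    { toFun := fun x => ⟨φ x, Submodule.mem_map_of_mem x.2⟩
      map_zero' := by ext; simp
      map_add' := by intro a b; ext; simp }
  have hb : Function.Bijective f := by
    constructor
    · intro a b h
      exact Subtype.ext (hinj (congrArg Subtype.val h))
    · rintro ⟨y, hy⟩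
      obtain ⟨x, hx, rfl⟩ := hy
      exact ⟨⟨x, hx⟩, rfl⟩
  have := lift_rank_eq_of_equiv_equiv (R := k) (R' := k) (M := ↥W) (M' := ↥(Submodule.map φ W))
    (frobenius k p) (AddEquiv.ofBijective f hb) (bijective_frobenius k p)
    (by intro r m; ext; exact φ.map_smulₛₗ r m)
  exact (Cardinal.lift_inj.mp this).symm

lemma finrank_map_eq_finrank (φ : V →ₛₗ[frobenius k p] V) (hinj : Function.Injective φ)
    (W : Submodule k V) : finrank k ↥(Submodule.map φ W) = finrank k ↥W := by
  rw [Module.finrank, Module.finrank, rank_map_eq_rank φ hinj W]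

variable (φ : V →ₛₗ[frobenius k p] V) (K : Submodule k V) (σ₀ : ℕ)

lemma iterMap_succ (i : ℕ) : iterMap φ K (i + 1) = Submodule.map φ (iterMap φ K i) :=
  Function.iterate_succ_apply' _ _ _

lemma iterComap_succ (i : ℕ) : iterComap φ K (i + 1) = Submodule.comap φ (iterComap φ K i) :=
  Function.iterate_succ_apply' _ _ _

lemma flagU_of_ge {m : ℕ} (h : σ₀ ≤ m) :
    flagU σ₀ φ K m = ⨆ i ∈ Finset.range (m - σ₀ + 1), iterMap φ K i := by
  rcases eq_or_lt_of_le h with rfl | hlt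
  · simp [flagU, Nat.sub_self, iterMap, iterComap]
  · rw [flagU, if_neg (not_le.mpr hlt)]

lemma flagU_of_le {m : ℕ} (h : m ≤ σ₀) :
    flagU σ₀ φ K m = ⨅ i ∈ Finset.range (σ₀ - m + 1), iterComap φ K i := by
  rw [flagU, if_pos h]

lemma flagU_le_iterComap {m i : ℕ} (hm : m ≤ σ₀) (hi : i ≤ σ₀ - m) :
    flagU σ₀ φ K m ≤ iterComap φ K i := by
  rw [flagU_of_le φ K σ₀ hm]
  exact iInf₂_le i (Finset.mem_range.mpr (Nat.lt_succ_of_le hi))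

lemma iterMap_le_flagU {m i : ℕ} (hm : σ₀ ≤ m) (hi : i ≤ m - σ₀) :
    iterMap φ K i ≤ flagU σ₀ φ K m := by
  rw [flagU_of_ge φ K σ₀ hm]
  exact le_iSup₂ (f := fun i _ => iterMap φ K i) i (Finset.mem_range.mpr (Nat.lt_succ_of_le hi))

lemma flagU_le_succ (m : ℕ) : flagU σ₀ φ K m ≤ flagU σ₀ φ K (m + 1) := by
  rcases le_or_gt (m + 1) σ₀ with h | h
  · rw [flagU_of_le φ K σ₀ h]
    refine le_iInf₂ fun i hi => ?_
    refine flagU_le_iterComap φ K σ₀ (le_of_add_le_left h) ?_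
    have := Finset.mem_range.mp hi
    omega
  · have hm : σ₀ ≤ m := Nat.lt_succ_iff.mp h
    rw [flagU_of_ge φ K σ₀ hm, flagU_of_ge φ K σ₀ (le_of_lt h)]
    refine iSup₂_le fun i hi => ?_
    refine le_iSup₂ (f := fun i _ => iterMap φ K i) i (Finset.mem_range.mpr ?_)
    have := Finset.mem_range.mp hi
    omega

lemma map_flagU_le_succ (m : ℕ) :
    Submodule.map φ (flagU σ₀ φ K m) ≤ flagU σ₀ φ K (m + 1) := by
  rcases le_or_gt (m + 1) σ₀ with h | h
  · rw [flagU_of_le φ K σ₀ h]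
    refine le_iInf₂ fun i hi => ?_
    have hi' : i + 1 ≤ σ₀ - m := by
      have := Finset.mem_range.mp hi; omega
    have h1 : flagU σ₀ φ K m ≤ iterComap φ K (i + 1) :=
      flagU_le_iterComap φ K σ₀ (le_of_add_le_left h) hi'
    calc Submodule.map φ (flagU σ₀ φ K m) ≤ Submodule.map φ (iterComap φ K (i + 1)) :=
          Submodule.map_mono h1
      _ ≤ iterComap φ K i := by
          rw [iterComap_succ]; exact Submodule.map_comap_le _ _
  · have hm : σ₀ ≤ m := Nat.lt_succ_iff.mp h
    rw [flagU_of_ge φ K σ₀ hm]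
    simp only [Submodule.map_iSup]
    refine iSup₂_le fun i hi => ?_
    rw [← iterMap_succ]
    refine iterMap_le_flagU φ K σ₀ (le_of_lt h) ?_
    have := Finset.mem_range.mp hi
    omega

/-- `U_m` is not `φ`-stable for `0 < m < 2σ₀`. -/
lemma not_map_flagU_le [FiniteDimensional k V] (hφ : Function.Bijective φ)
    (hU : finrank k ↥(bigU φ K) = 2 * σ₀)
    (hflag : ∀ m : ℕ, m ≤ 2 * σ₀ → finrank k ↥(flagU σ₀ φ K m) = m)
    {m : ℕ} (hm0 : 0 < m) (hm2 : m < 2 * σ₀) :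
    ¬ Submodule.map φ (flagU σ₀ φ K m) ≤ flagU σ₀ φ K m := by
  intro hle
  set U := flagU σ₀ φ K m with hUdef
  have hdim : finrank k ↥U = m := hflag m (le_of_lt hm2)
  have heq : Submodule.map φ U = U := by
    apply Submodule.eq_of_le_of_finrank_le hle
    rw [finrank_map_eq_finrank φ hφ.1]
  rcases le_or_gt m σ₀ with hmle | hmgt
  · -- U ≤ K and φ-stable ⇒ U ≤ U₀ = 0
    have hUK : U ≤ K := by
      have := flagU_le_iterComap φ K σ₀ hmle (Nat.zero_le _)
      simpa [iterComap] using this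
    have hstep : ∀ i : ℕ, U ≤ iterComap φ K i := by
      intro i
      induction i with
      | zero => simpa [iterComap] using hUK
      | succ n ih =>
        rw [iterComap_succ]
        have h1 : U ≤ Submodule.comap φ (Submodule.map φ U) := Submodule.le_comap_map _ _
        rw [heq] at h1
        exact le_trans h1 (Submodule.comap_mono ih)
    have hU0 : U ≤ flagU σ₀ φ K 0 := by
      rw [flagU_of_le φ K σ₀ (Nat.zero_le _)]
      exact le_iInf₂ fun i _ => hstep i
    have h0 : finrank k ↥(flagU σ₀ φ K 0) = 0 := hflag 0 (Nat.zero_le _)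
    have := Submodule.finrank_mono hU0
    omega
  · -- K ≤ U and φ-stable ⇒ bigU ≤ U
    have hKU : K ≤ U := by
      have := iterMap_le_flagU φ K σ₀ (le_of_lt hmgt) (Nat.zero_le (m - σ₀))
      simpa [iterMap] using this
    have hstep : ∀ i : ℕ, iterMap φ K i ≤ U := by
      intro i
      induction i with
      | zero => simpa [iterMap] using hKU
      | succ n ih =>
        rw [iterMap_succ]
        exact le_trans (Submodule.map_mono ih) hle
    have hbig : bigU φ K ≤ U := iSup_le hstep
    have := Submodule.finrank_mono hbig
    omega

end helpers

/-- for `0 < m < 2σ₀` the flag `U_m` satisfies the recurrences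
`U_{m+1} = U_m + φ(U_m)` and `φ(U_{m-1}) = U_m ∩ φ(U_m)`. -/
theorem flagU_recurrences [FiniteDimensional k V]
    (φ : V →ₛₗ[frobenius k p] V) (hφ : Function.Bijective φ)
    (σ₀ : ℕ) (hσ₀ : 1 ≤ σ₀) (K : Submodule k V)
    (hK : finrank k K = σ₀)
    (hKφ : finrank k ↥(K ⊔ Submodule.map φ K) = σ₀ + 1)
    (hU : finrank k ↥(bigU φ K) = 2 * σ₀)
    (hflag : ∀ m : ℕ, m ≤ 2 * σ₀ → finrank k ↥(flagU σ₀ φ K m) = m) :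
    ∀ m : ℕ, 0 < m → m < 2 * σ₀ →
      flagU σ₀ φ K (m + 1) = flagU σ₀ φ K m ⊔ Submodule.map φ (flagU σ₀ φ K m) ∧
      Submodule.map φ (flagU σ₀ φ K (m - 1)) =
        flagU σ₀ φ K m ⊓ Submodule.map φ (flagU σ₀ φ K m) := by
  intro m hm0 hm2
  set U := flagU σ₀ φ K m with hUdef
  set U' := flagU σ₀ φ K (m + 1) with hU'def
  have hdimU : finrank k ↥U = m := hflag m (le_of_lt hm2)
  have hdimU' : finrank k ↥U' = m + 1 := hflag (m + 1) hm2
  have hle1 : U ≤ U' := flagU_le_succ φ K σ₀ m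
  have hle2 : Submodule.map φ U ≤ U' := map_flagU_le_succ φ K σ₀ m
  have hsup_le : U ⊔ Submodule.map φ U ≤ U' := sup_le hle1 hle2
  have hnot : ¬ Submodule.map φ U ≤ U := not_map_flagU_le φ K σ₀ hφ hU hflag hm0 hm2
  have hlt : U < U ⊔ Submodule.map φ U := by
    refine lt_of_le_of_ne le_sup_left fun h => hnot ?_
    exact le_sup_right.trans h.ge
  have hfr_lt : m < finrank k ↥(U ⊔ Submodule.map φ U) := by
    rw [← hdimU]
    exact Submodule.finrank_lt_finrank_of_lt hlt
  have hsup : U ⊔ Submodule.map φ U = U' := by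
    apply Submodule.eq_of_le_of_finrank_le hsup_le
    omega
  refine ⟨hsup.symm, ?_⟩
  -- second part
  obtain ⟨m', rfl⟩ : ∃ m', m = m' + 1 := ⟨m - 1, (Nat.succ_pred_eq_of_pos hm0).symm⟩
  simp only [Nat.add_sub_cancel]
  have hdimUm' : finrank k ↥(flagU σ₀ φ K m') = m' := hflag m' (by omega)
  have hle3 : Submodule.map φ (flagU σ₀ φ K m') ≤ U := map_flagU_le_succ φ K σ₀ m'
  have hle4 : Submodule.map φ (flagU σ₀ φ K m') ≤ Submodule.map φ U :=
    Submodule.map_mono (flagU_le_succ φ K σ₀ m')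
  have hdim_map : finrank k ↥(Submodule.map φ (flagU σ₀ φ K m')) = m' := by
    rw [finrank_map_eq_finrank φ hφ.1, hdimUm']
  have hdim_mapU : finrank k ↥(Submodule.map φ U) = m' + 1 := by
    rw [finrank_map_eq_finrank φ hφ.1, hdimU]
  have hkey := Submodule.finrank_sup_add_finrank_inf_eq U (Submodule.map φ U)
  rw [hsup, hdimU', hdimU, hdim_mapU] at hkey
  apply Submodule.eq_of_le_of_finrank_le (le_inf hle3 hle4)
  omega
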